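/- Suppose R_0 > 1. Then the point (V_i*, H_i*) with V_i* = (β_v β_h N_v* − r_v(1−q) N_h*(d_h+γ_h)) / (β_v β_h + r_v(1−q) β_h) and H_i* = β_h V_i* / (β_h V_i*/N_h* + d_h + γ_h) satisfies 0 < V_i* < N_v*, 0 < H_i* < N_h*, and f_1(V_i*, H_i*) = 0 and f_2(V_i*, H_i*) = 0; that is, (V_i*, H_i*) is a positive equilibrium (endemic equilibrium) of the kinetic West Nile virus system dV/dt = f_1(V,H), dH/dt = f_2(V,H). -/

import Mathlib

/-- If `R₀ > 1`, the endemic equilibrium `(Vi*, Hi*)` is a positive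
equilibrium of the kinetic West Nile virus system. -/
theorem endemic_equilibrium_exists
    (βv βh rv dh γh Nv Nh q : ℝ)
    (hβv : 0 < βv) (hβh : 0 < βh) (hrv : 0 < rv) (hdh : 0 < dh) (hγh : 0 < γh)
    (hNv : 0 < Nv) (hNh : 0 < Nh) (hq0 : 0 ≤ q) (hq1 : q < 1)
    (hR0 : 1 < Real.sqrt (βv * βh * Nv / (rv * (1 - q) * Nh * (dh + γh))))
    (Vstar Hstar : ℝ)
    (hV : Vstar = (βv * βh * Nv - rv * (1 - q) * Nh * (dh + γh)) /
        (βv * βh + rv * (1 - q) * βh))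
    (hH : Hstar = βh * Vstar / (βh * Vstar / Nh + dh + γh)) :
    0 < Vstar ∧ Vstar < Nv ∧ 0 < Hstar ∧ Hstar < Nh ∧
    βv * (Nv - Vstar) * Hstar / Nh - rv * (1 - q) * Vstar = 0 ∧
    βh * Vstar * (Nh - Hstar) / Nh - (dh + γh) * Hstar = 0 := by
  have hq : 0 < 1 - q := by linarith
  have hD : 0 < rv * (1 - q) * Nh * (dh + γh) := by positivity
  -- from R0 > 1 deduce the ratio > 1
  have hx : 1 < βv * βh * Nv / (rv * (1 - q) * Nh * (dh + γh)) := by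
    have h0 : 0 ≤ βv * βh * Nv / (rv * (1 - q) * Nh * (dh + γh)) := by positivity
    nlinarith [Real.sq_sqrt h0, hR0]
  have hmain : rv * (1 - q) * Nh * (dh + γh) < βv * βh * Nv :=
    (one_lt_div hD).mp hx
  have hden : 0 < βv * βh + rv * (1 - q) * βh := by positivity
  have hVpos : 0 < Vstar := by
    rw [hV]; exact div_pos (by linarith) hden
  have hVlt : Vstar < Nv := by
    rw [hV]
    rw [div_lt_iff₀ hden]
    nlinarith [mul_pos (mul_pos (mul_pos hrv hq) hNv) hβh]
  have hHden : 0 < βh * Vstar / Nh + dh + γh := by positivity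
  have hHpos : 0 < Hstar := by
    rw [hH]; positivity
  have hHlt : Hstar < Nh := by
    rw [hH, div_lt_iff₀ hHden]
    have : βh * Vstar / Nh * Nh = βh * Vstar := by field_simp
    nlinarith
  refine ⟨hVpos, hVlt, hHpos, hHlt, ?_, ?_⟩
  · have hVeq : Vstar * (βv * βh + rv * (1 - q) * βh)
        = βv * βh * Nv - rv * (1 - q) * Nh * (dh + γh) := by
      rw [hV]; field_simp
    rw [hH]
    field_simp
    linear_combination (-Vstar) * hVeq
  · rw [hH]
    field_simp
    ring
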